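/- Let E be a finite-dimensional real inner product space, p ≥ 1 an integer, and let σ > 0, q > 0, A > 0, c > 0, u_min ∈ (0,1] and f* ∈ ℝ. Let x : ℕ → E, u, R, s : ℕ → ℝ satisfy for all k: u (k+1) ∈ [u_min, 1]; R (k+1) = (1 - u (k+1))·R k + u (k+1)·f(x (k+1)) where f : E → ℝ; δ k := R k - f* ≥ 0; R k - R (k+1) ≥ u_min·c·‖x (k+1) - x k‖^(p+1); s (k+1) ≥ 0 and s (k+1) ≤ A·‖x (k+1) - x k‖^p; and f(x (k+1)) - f* ≤ σ·(s (k+1))^q. Then for all k: δ (k+1) ≤ (1/u_min)·(δ k - δ (k+1)) + (κ/u_min)·(δ k - δ (k+1))^(p·q/(p+1)), where κ = σ·A^q/(u_min·c)^(p·q/(p+1)). -/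

import Mathlib

/-- Key recurrence in the proof of Theorem 5 (KL case): the gap `δ k = R k - f*` of the
reference sequence satisfies
`δ (k+1) ≤ (1/u_min)·(δ k - δ (k+1)) + (κ/u_min)·(δ k - δ (k+1))^(pq/(p+1))`
with `κ = σ·A^q/(u_min·c)^(pq/(p+1))`. -/
theorem nhota_kl_recurrence
    {E : Type*} [NormedAddCommGroup E] [InnerProductSpace ℝ E] [FiniteDimensional ℝ E]
    (p : ℕ) (hp : 1 ≤ p) (σ q A c u_min fstar : ℝ)
    (hσ : 0 < σ) (hq : 0 < q) (hA : 0 < A) (hc : 0 < c)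
    (humin : 0 < u_min ∧ u_min ≤ 1)
    (f : E → ℝ) (x : ℕ → E) (u R s : ℕ → ℝ)
    (hu : ∀ k : ℕ, u_min ≤ u (k + 1) ∧ u (k + 1) ≤ 1)
    (hRrec : ∀ k : ℕ, R (k + 1) = (1 - u (k + 1)) * R k + u (k + 1) * f (x (k + 1)))
    (hδ : ∀ k : ℕ, 0 ≤ R k - fstar)
    (hdec : ∀ k : ℕ, u_min * c * ‖x (k + 1) - x k‖ ^ (p + 1) ≤ R k - R (k + 1))
    (hs : ∀ k : ℕ, 0 ≤ s (k + 1))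
    (hsb : ∀ k : ℕ, s (k + 1) ≤ A * ‖x (k + 1) - x k‖ ^ p)
    (hkl : ∀ k : ℕ, f (x (k + 1)) - fstar ≤ σ * s (k + 1) ^ q) :
    ∀ k : ℕ,
      R (k + 1) - fstar ≤
        (1 / u_min) * ((R k - fstar) - (R (k + 1) - fstar)) +
          ((σ * A ^ q / (u_min * c) ^ ((p : ℝ) * q / (p + 1))) / u_min) *
            ((R k - fstar) - (R (k + 1) - fstar)) ^ ((p : ℝ) * q / (p + 1)) := by
  obtain ⟨humin0, humin1⟩ := humin
  intro k
  set θ : ℝ := (p : ℝ) * q / (p + 1) with hθ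
  set d : ℝ := ‖x (k + 1) - x k‖ with hd
  set Δ : ℝ := R k - R (k + 1) with hΔ
  have hdnn : (0:ℝ) ≤ d := norm_nonneg _
  have hupos : 0 < u (k + 1) := lt_of_lt_of_le humin0 (hu k).1
  have hΔnn : 0 ≤ Δ := le_trans (by positivity) (hdec k)
  have hθnn : 0 ≤ θ := by
    apply div_nonneg
    · positivity
    · positivity
  -- step 1: δ(k+1) = (f - f*) + ((1-u)/u) Δ
  have h1 : R (k + 1) - fstar = (f (x (k + 1)) - fstar) + ((1 - u (k + 1)) / u (k + 1)) * Δ := by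
    have := hRrec k
    field_simp
    nlinarith [this]
  -- step 2: (1-u)/u * Δ ≤ (1/u_min) * Δ
  have h2 : ((1 - u (k + 1)) / u (k + 1)) * Δ ≤ (1 / u_min) * Δ := by
    apply mul_le_mul_of_nonneg_right _ hΔnn
    exact div_le_div₀ (by norm_num) (by linarith [(hu k).2]) humin0 (hu k).1
  -- step 3: σ s^q ≤ κ Δ^θ
  have hdp : d ^ (p + 1) ≤ Δ / (u_min * c) := by
    rw [le_div_iff₀ (by positivity)]
    calc d ^ (p + 1) * (u_min * c) = u_min * c * d ^ (p + 1) := by ring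
      _ ≤ Δ := hdec k
  have h3 : σ * s (k + 1) ^ q ≤ σ * A ^ q * (Δ / (u_min * c)) ^ θ := by
    have hsq : s (k + 1) ^ q ≤ (A * d ^ p) ^ q :=
      Real.rpow_le_rpow (hs k) (hsb k) hq.le
    have hspl : (A * d ^ p) ^ q = A ^ q * d ^ ((p : ℝ) * q) := by
      rw [Real.mul_rpow hA.le (by positivity), ← Real.rpow_natCast d p,
        ← Real.rpow_mul hdnn]
    have hdθ : d ^ ((p : ℝ) * q) = (d ^ (p + 1)) ^ θ := by
      rw [← Real.rpow_natCast d (p + 1), ← Real.rpow_mul hdnn]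
      congr 1
      rw [hθ]
      have hne : ((p : ℝ) + 1) ≠ 0 := by positivity
      push_cast
      field_simp
    have hmono : (d ^ (p + 1) : ℝ) ^ θ ≤ (Δ / (u_min * c)) ^ θ :=
      Real.rpow_le_rpow (by positivity) hdp hθnn
    calc σ * s (k + 1) ^ q ≤ σ * (A * d ^ p) ^ q := by nlinarith [hsq]
      _ = σ * (A ^ q * (d ^ (p + 1)) ^ θ) := by rw [hspl, hdθ]
      _ ≤ σ * (A ^ q * (Δ / (u_min * c)) ^ θ) := by
          have hAq : (0:ℝ) ≤ A ^ q := Real.rpow_nonneg hA.le q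
          exact mul_le_mul_of_nonneg_left
            (mul_le_mul_of_nonneg_left hmono hAq) hσ.le
      _ = σ * A ^ q * (Δ / (u_min * c)) ^ θ := by ring
  have h4 : σ * A ^ q * (Δ / (u_min * c)) ^ θ ≤
      ((σ * A ^ q / (u_min * c) ^ θ) / u_min) * Δ ^ θ := by
    have hΔθ : (0:ℝ) ≤ Δ ^ θ := Real.rpow_nonneg hΔnn θ
    have hucθ : (0:ℝ) < (u_min * c) ^ θ := Real.rpow_pos_of_pos (by positivity) θ
    rw [Real.div_rpow hΔnn (by positivity),
      show σ * A ^ q / (u_min * c) ^ θ / u_min * Δ ^ θ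
        = σ * A ^ q * (Δ ^ θ / ((u_min * c) ^ θ * u_min)) from by ring]
    apply mul_le_mul_of_nonneg_left _ (by positivity)
    apply div_le_div_of_nonneg_left hΔθ (by positivity)
    nlinarith [hucθ]
  rw [show (R k - fstar) - (R (k + 1) - fstar) = Δ from by rw [hΔ]; ring]
  calc R (k + 1) - fstar = (f (x (k + 1)) - fstar) + ((1 - u (k + 1)) / u (k + 1)) * Δ := h1
    _ ≤ σ * s (k + 1) ^ q + (1 / u_min) * Δ := add_le_add (hkl k) h2
    _ ≤ ((σ * A ^ q / (u_min * c) ^ θ) / u_min) * Δ ^ θ + (1 / u_min) * Δ :=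
        add_le_add_left (le_trans h3 h4) _
    _ = (1 / u_min) * Δ + ((σ * A ^ q / (u_min * c) ^ θ) / u_min) * Δ ^ θ := by ring
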